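/- Let L be the linear quiver on m vertices v_1 → v_2 → ⋯ → v_m, with arrow i going from v_i to v_{i+1} (arrows ordered 1 < 2 < ⋯ < m-1). Then the permutation of vertices ξ⁻_L determined by structural minimally decreasing walks satisfies ξ⁻_L(v_t) = v_{t+1} for t < m and ξ⁻_L(v_m) = v_1; in particular ξ⁻_L is an m-cycle. -/

import Mathlib

open Matrix Polynomial

/-- Incidence matrix of a quiver with vertex set `Fin m`, arrow set `Fin n`,
source map `s` and target map `t`: the column of arrow `i` is `e_{s i} - e_{t i}`. -/
def incMatrix {m n : ℕ} (s t : Fin n → Fin m) : Matrix (Fin m) (Fin n) ℤ :=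
  Matrix.of fun v i => (if v = s i then (1 : ℤ) else 0) - (if v = t i then (1 : ℤ) else 0)

/-- Connectedness of the underlying multigraph of the quiver `(s, t)`. -/
def QuiverConnected {m n : ℕ} (s t : Fin n → Fin m) : Prop :=
  ∀ v w : Fin m,
    Relation.ReflTransGen (fun a b => ∃ i : Fin n, (s i = a ∧ t i = b) ∨ (s i = b ∧ t i = a)) v w

/-- The endpoint of arrow `i` other than `v` (for a loop-less quiver). -/
def otherEnd {m n : ℕ} (s t : Fin n → Fin m) (i : Fin n) (v : Fin m) : Fin m :=
  if s i = v then t i else s i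

/-- Iterate the minimally decreasing walk starting at `v`, using only arrows with
index `< b`, always crossing the maximal available arrow. Returns the final vertex. -/
def xiAux {m n : ℕ} (s t : Fin n → Fin m) (b : ℕ) (v : Fin m) : Fin m :=
  if h : (Finset.univ.filter (fun i : Fin n => (s i = v ∨ t i = v) ∧ i.val < b)).Nonempty then
    xiAux s t
      ((Finset.univ.filter (fun i : Fin n => (s i = v ∨ t i = v) ∧ i.val < b)).max' h).val
      (otherEnd s t
        ((Finset.univ.filter (fun i : Fin n => (s i = v ∨ t i = v) ∧ i.val < b)).max' h) v)
  else v
termination_by b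
decreasing_by
  exact (Finset.mem_filter.mp (Finset.max'_mem _ h)).2.2

/-- The permutation of vertices `ξ⁻` determined by structural minimally decreasing walks:
`xiDown s t v` is the end vertex of the structural decreasing walk starting at `v`. -/
def xiDown {m n : ℕ} (s t : Fin n → Fin m) (v : Fin m) : Fin m :=
  xiAux s t n v

/-- Iterate the minimally increasing walk starting at `v`, using only arrows with
index `≥ b`, always crossing the minimal available arrow. Returns the final vertex. -/
def xiAuxUp {m n : ℕ} (s t : Fin n → Fin m) (b : ℕ) (v : Fin m) : Fin m :=
  if h : (Finset.univ.filter (fun i : Fin n => (s i = v ∨ t i = v) ∧ b ≤ i.val)).Nonempty then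
    xiAuxUp s t
      (((Finset.univ.filter (fun i : Fin n => (s i = v ∨ t i = v) ∧ b ≤ i.val)).min' h).val + 1)
      (otherEnd s t
        ((Finset.univ.filter (fun i : Fin n => (s i = v ∨ t i = v) ∧ b ≤ i.val)).min' h) v)
  else v
termination_by n - b
decreasing_by
  have h1 := (Finset.mem_filter.mp (Finset.min'_mem _ h)).2.2
  have h2 := ((Finset.univ.filter (fun i : Fin n => (s i = v ∨ t i = v) ∧ b ≤ i.val)).min' h).isLt
  omega

/-- The map `ξ⁺`: end vertex of the structural minimally increasing walk starting at `v`. -/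
def xiUp {m n : ℕ} (s t : Fin n → Fin m) (v : Fin m) : Fin m :=
  xiAuxUp s t 0 v


/-- Source vertex of a walk-step `(i, ε)`: `s i` if traversed positively, else `t i`. -/
def stepSrc {m n : ℕ} (s t : Fin n → Fin m) (p : Fin n × Bool) : Fin m :=
  if p.2 then s p.1 else t p.1

/-- Target vertex of a walk-step `(i, ε)`. -/
def stepTgt {m n : ℕ} (s t : Fin n → Fin m) (p : Fin n × Bool) : Fin m :=
  if p.2 then t p.1 else s p.1

def linS (m : ℕ) : Fin (m-1) → Fin m := fun i => ⟨i.val, by have := i.isLt; omega⟩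
def linT (m : ℕ) : Fin (m-1) → Fin m := fun i => ⟨i.val + 1, by have := i.isLt; omega⟩

lemma auxA (m : ℕ) : ∀ b, (hb : b < m) → xiAux (linS m) (linT m) b ⟨b, hb⟩ = ⟨0, by omega⟩ := by
  intro b
  induction b with
  | zero =>
    intro hb
    rw [xiAux]
    simp
  | succ b ih =>
    intro hb
    rw [xiAux]
    have hfil : (Finset.univ.filter (fun i : Fin (m-1) =>
        (linS m i = ⟨b+1, hb⟩ ∨ linT m i = ⟨b+1, hb⟩) ∧ i.val < b+1))
        = {⟨b, by omega⟩} := by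
      ext i
      simp [linS, linT, Fin.ext_iff]
      omega
    rw [hfil]
    have hne : ({(⟨b, by omega⟩ : Fin (m-1))} : Finset (Fin (m-1))).Nonempty :=
      Finset.singleton_nonempty _
    rw [dif_pos hne]
    have hmax : ({(⟨b, by omega⟩ : Fin (m-1))} : Finset (Fin (m-1))).max' hne = ⟨b, by omega⟩ :=
      Finset.max'_singleton _
    rw [hmax]
    have hoe : otherEnd (linS m) (linT m) ⟨b, by omega⟩ ⟨b+1, hb⟩ = ⟨b, by omega⟩ := by
      simp [otherEnd, linS, linT, Fin.ext_iff]
    rw [hoe]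
    exact ih (by omega)

lemma mainStep (m : ℕ) (v : Fin m) :
    (xiAux (linS m) (linT m) (m-1) v).val = (v.val + 1) % m := by
  have hm : 0 < m := v.pos
  by_cases hv : v.val + 1 < m
  · -- v is not the last vertex: cross arrow v, land at v+1, stop
    rw [xiAux]
    have hmem : (⟨v.val, by omega⟩ : Fin (m-1)) ∈ (Finset.univ.filter (fun i : Fin (m-1) =>
        (linS m i = v ∨ linT m i = v) ∧ i.val < m-1)) := by
      simp [linS, linT, Fin.ext_iff]
    have hne : (Finset.univ.filter (fun i : Fin (m-1) =>
        (linS m i = v ∨ linT m i = v) ∧ i.val < m-1)).Nonempty := ⟨_, hmem⟩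
    rw [dif_pos hne]
    have hmax : (Finset.univ.filter (fun i : Fin (m-1) =>
        (linS m i = v ∨ linT m i = v) ∧ i.val < m-1)).max' hne = ⟨v.val, by omega⟩ := by
      apply le_antisymm
      · apply Finset.max'_le
        intro i hi
        simp [linS, linT, Fin.ext_iff] at hi
        show i.val ≤ v.val
        omega
      · exact Finset.le_max' _ _ hmem
    rw [hmax]
    have hoe : otherEnd (linS m) (linT m) ⟨v.val, by omega⟩ v = ⟨v.val + 1, by omega⟩ := by
      simp [otherEnd, linS, linT, Fin.ext_iff]
    rw [hoe]
    rw [xiAux]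
    have hfil : (Finset.univ.filter (fun i : Fin (m-1) =>
        (linS m i = (⟨v.val + 1, by omega⟩ : Fin m) ∨ linT m i = ⟨v.val + 1, by omega⟩)
          ∧ i.val < v.val)) = ∅ := by
      ext i
      simp [linS, linT, Fin.ext_iff]
      omega
    rw [hfil]
    simp [Nat.mod_eq_of_lt hv]
  · -- v is the last vertex
    have hv' : v.val = m - 1 := by have := v.isLt; omega
    by_cases h1 : m = 1
    · subst h1
      rw [xiAux]
      have : (Finset.univ.filter (fun i : Fin 0 =>
          (linS 1 i = v ∨ linT 1 i = v) ∧ i.val < 0)) = ∅ := by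
        ext i; exact absurd i.isLt (by omega)
      rw [this]
      simp
    · have hm2 : 2 ≤ m := by omega
      rw [xiAux]
      have hfil : (Finset.univ.filter (fun i : Fin (m-1) =>
          (linS m i = v ∨ linT m i = v) ∧ i.val < m-1))
          = {⟨m-2, by omega⟩} := by
        ext i
        simp [linS, linT, Fin.ext_iff]
        have := i.isLt
        omega
      rw [hfil]
      have hne : ({(⟨m-2, by omega⟩ : Fin (m-1))} : Finset (Fin (m-1))).Nonempty :=
        Finset.singleton_nonempty _
      rw [dif_pos hne, Finset.max'_singleton]
      have hoe : otherEnd (linS m) (linT m) ⟨m-2, by omega⟩ v = ⟨m-2, by omega⟩ := by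
        simp [otherEnd, linS, linT, Fin.ext_iff]
        omega
      rw [hoe, auxA m (m-2) (by omega)]
      have hvm : v.val + 1 = m := by omega
      show (0:ℕ) = (v.val+1)%m
      rw [hvm, Nat.mod_self]

lemma iterStep (m : ℕ) : ∀ (k : ℕ) (v : Fin m),
    ((xiAux (linS m) (linT m) (m-1))^[k] v).val = (v.val + k) % m := by
  intro k
  induction k with
  | zero => intro v; simp [Nat.mod_eq_of_lt v.isLt]
  | succ k ih =>
    intro v
    rw [Function.iterate_succ_apply, ih, mainStep m v, Nat.mod_add_mod]
    congr 1
    omega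


/-- for the linear quiver `v_1 → v_2 → ⋯ → v_m` (arrow `i` from `v_i` to
`v_{i+1}`, ordered increasingly), the permutation `ξ⁻` sends `v_t ↦ v_{t+1}` (`t < m`)
and `v_m ↦ v_1`; in particular `ξ⁻` is an `m`-cycle (a single orbit). -/
theorem xiDown_linear_quiver (m : ℕ) :
    (∀ v : Fin m,
        (xiDown (fun i : Fin (m - 1) => (⟨i.val, by omega⟩ : Fin m))
            (fun i : Fin (m - 1) => (⟨i.val + 1, by omega⟩ : Fin m)) v).val
          = (v.val + 1) % m)
    ∧ ∀ v w : Fin m, ∃ k : ℕ,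
        (xiDown (fun i : Fin (m - 1) => (⟨i.val, by omega⟩ : Fin m))
            (fun i : Fin (m - 1) => (⟨i.val + 1, by omega⟩ : Fin m)))^[k] v = w := by
  constructor
  · intro v
    exact mainStep m v
  · intro v w
    refine ⟨m - v.val + w.val, ?_⟩
    apply Fin.ext
    have h := iterStep m (m - v.val + w.val) v
    have he : (xiDown (fun i : Fin (m - 1) => (⟨i.val, by omega⟩ : Fin m))
            (fun i : Fin (m - 1) => (⟨i.val + 1, by omega⟩ : Fin m)))
        = xiAux (linS m) (linT m) (m-1) := rfl
    rw [he, h]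
    have hv := v.isLt
    have hw := w.isLt
    have : v.val + (m - v.val + w.val) = m + w.val := by omega
    rw [this, Nat.add_mod_left, Nat.mod_eq_of_lt hw]
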